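/- Let (X,r) be a square-free solution of finite order |X| = n with cyclic degree p, let G = G(X,r), and let F_p be the subgroup of G generated by {ι(x)^p : x ∈ X}. Then F_p is a normal subgroup of G. -/

import Mathlib

/-- The left action `σ_x(y)`: first component of `r (x, y)`. -/
def sig {X : Type*} (r : X × X → X × X) (x y : X) : X := (r (x, y)).1

/-- The right action `τ_y(x)`: second component of `r (x, y)`. -/
def tau {X : Type*} (r : X × X → X × X) (y x : X) : X := (r (x, y)).2

/-- `r¹² = r × id`. -/
def r12 {X : Type*} (r : X × X → X × X) : X × X × X → X × X × X :=
  fun t => ((r (t.1, t.2.1)).1, (r (t.1, t.2.1)).2, t.2.2)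

/-- `r²³ = id × r`. -/
def r23 {X : Type*} (r : X × X → X × X) : X × X × X → X × X × X :=
  fun t => (t.1, (r (t.2.1, t.2.2)).1, (r (t.2.1, t.2.2)).2)

/-- The braid relation `r¹² ∘ r²³ ∘ r¹² = r²³ ∘ r¹² ∘ r²³`. -/
def IsBraided {X : Type*} (r : X × X → X × X) : Prop :=
  r12 r ∘ r23 r ∘ r12 r = r23 r ∘ r12 r ∘ r23 r

/-- Nondegeneracy: every `σ_x` and every `τ_y` is bijective. -/
def Nondegenerate {X : Type*} (r : X × X → X × X) : Prop :=
  (∀ x, Function.Bijective (sig r x)) ∧ (∀ y, Function.Bijective (tau r y))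

/-- The defining relators of the group `G(X,r)`:
`x · y · (σ_x(y) · τ_y(x))⁻¹` for all `x, y ∈ X`. -/
def ybRels {X : Type*} (r : X × X → X × X) : Set (FreeGroup X) :=
  { w | ∃ x y : X, w = FreeGroup.of x * FreeGroup.of y *
      (FreeGroup.of (sig r x y) * FreeGroup.of (tau r y x))⁻¹ }

/-- The group `G(X,r)` associated with `(X,r)`, presented by generators `X`
and relations `x y = σ_x(y) τ_y(x)`. -/
abbrev YBGroup {X : Type*} (r : X × X → X × X) := PresentedGroup (ybRels r)

/-- The canonical map `ι : X → G(X,r)`. -/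
def ybι {X : Type*} (r : X × X → X × X) : X → YBGroup r := PresentedGroup.of

section Aux

variable {X : Type*} (r : X × X → X × X)

/-- Involutivity, first component: `σ_{σ_x(y)}(τ_y(x)) = x`. -/
lemma aux_I1 (hinv : Function.Involutive r) (x y : X) :
    sig r (sig r x y) (tau r y x) = x := by
  have h := hinv (x, y)
  have : r (sig r x y, tau r y x) = (x, y) := by
    simpa [sig, tau] using h
  simpa [sig] using congrArg Prod.fst this

/-- Involutivity, second component: `τ_{τ_y(x)}(σ_x(y)) = y`. -/
lemma aux_I2 (hinv : Function.Involutive r) (x y : X) :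
    tau r (tau r y x) (sig r x y) = y := by
  have h := hinv (x, y)
  have : r (sig r x y, tau r y x) = (x, y) := by
    simpa [sig, tau] using h
  simpa [tau] using congrArg Prod.snd this

/-- Braid relation, first component: `σ_x(σ_y(z)) = σ_{σ_x(y)}(σ_{τ_y(x)}(z))`. -/
lemma aux_YB1 (hbr : IsBraided r) (x y z : X) :
    sig r (sig r x y) (sig r (tau r y x) z) = sig r x (sig r y z) := by
  have h := congrFun hbr (x, y, z)
  simpa [r12, r23, sig, tau] using congrArg Prod.fst h

/-- Square-freeness componentwise. -/
lemma aux_sf_sig (hsf : ∀ x : X, r (x, x) = (x, x)) (x : X) : sig r x x = x := by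
  simp [sig, hsf x]

lemma aux_sf_tau (hsf : ∀ x : X, r (x, x) = (x, x)) (x : X) : tau r x x = x := by
  simp [tau, hsf x]

/-- `lri`: `σ_y(τ_y(x)) = x`. -/
lemma aux_lri (hnd : Nondegenerate r) (hinv : Function.Involutive r)
    (hbr : IsBraided r) (hsf : ∀ x : X, r (x, x) = (x, x)) (x y : X) :
    sig r y (tau r y x) = x := by
  have h1 := aux_YB1 r hbr x y (tau r y x)
  rw [aux_sf_sig r hsf (tau r y x), aux_I1 r hinv x y] at h1
  -- h1 : x = sig r x (sig r y (tau r y x))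
  have hx : sig r x x = x := aux_sf_sig r hsf x
  exact ((hnd.1 x).1 (hx.trans h1)).symm

/-- `τ_y(σ_y(x)) = x`. -/
lemma aux_irl (hnd : Nondegenerate r) (hinv : Function.Involutive r)
    (hbr : IsBraided r) (hsf : ∀ x : X, r (x, x) = (x, x)) (x y : X) :
    tau r y (sig r y x) = x := by
  apply (hnd.1 y).1
  rw [aux_lri r hnd hinv hbr hsf (sig r y x) y]

/-- The key cyclic-type identity: `σ_{τ_x(z)}(x) = σ_z(x)`. -/
lemma aux_cyc (hnd : Nondegenerate r) (hinv : Function.Involutive r)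
    (hbr : IsBraided r) (hsf : ∀ x : X, r (x, x) = (x, x)) (x z : X) :
    sig r (tau r x z) x = sig r z x := by
  have h2 : tau r (tau r x z) (sig r z x) = x := aux_I2 r hinv z x
  have := congrArg (sig r (tau r x z)) h2
  rw [aux_lri r hnd hinv hbr hsf (sig r z x) (tau r x z)] at this
  exact this.symm

lemma aux_cyc_iter (hnd : Nondegenerate r) (hinv : Function.Involutive r)
    (hbr : IsBraided r) (hsf : ∀ x : X, r (x, x) = (x, x)) (x : X) :
    ∀ (k : ℕ) (z : X), sig r ((tau r x)^[k] z) x = sig r z x := by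
  intro k
  induction k with
  | zero => intro z; rfl
  | succ n ih =>
    intro z
    rw [Function.iterate_succ_apply, ih (tau r x z),
      aux_cyc r hnd hinv hbr hsf x z]

lemma aux_tau_iter_id (hnd : Nondegenerate r) (hinv : Function.Involutive r)
    (hbr : IsBraided r) (hsf : ∀ x : X, r (x, x) = (x, x)) (p : ℕ)
    (hpord : ∀ x : X, (sig r x)^[p] = id) (x y : X) :
    (tau r x)^[p] y = y := by
  have key : ∀ (k : ℕ) (z : X), (sig r x)^[k] ((tau r x)^[k] z) = z := by
    intro k
    induction k with
    | zero => intro z; rfl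
    | succ n ih =>
      intro z
      rw [Function.iterate_succ_apply, Function.iterate_succ_apply',
        aux_lri r hnd hinv hbr hsf, ih]
  have h := key p y
  rwa [hpord x] at h
  
/-- The defining relation holds in `G(X,r)`. -/
lemma aux_rel (x y : X) :
    ybι r x * ybι r y = ybι r (sig r x y) * ybι r (tau r y x) := by
  have hmem : (FreeGroup.of x * FreeGroup.of y *
      (FreeGroup.of (sig r x y) * FreeGroup.of (tau r y x))⁻¹) ∈
      Subgroup.normalClosure (ybRels r) :=
    Subgroup.subset_normalClosure ⟨x, y, rfl⟩
  have h1 : (PresentedGroup.mk (ybRels r)) (FreeGroup.of x * FreeGroup.of y *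
      (FreeGroup.of (sig r x y) * FreeGroup.of (tau r y x))⁻¹) = 1 :=
    (QuotientGroup.eq_one_iff _).mpr hmem
  rw [map_mul, map_inv, map_mul] at h1
  have h2 := mul_eq_one_iff_eq_inv.mp h1
  simpa [ybι, PresentedGroup.of, inv_inv] using h2

/-- Key group identity: `ι(y) · ι(x)^k = ι(σ_y(x))^k · ι(τ_x^k(y))`. -/
lemma aux_conj_pow (hnd : Nondegenerate r) (hinv : Function.Involutive r)
    (hbr : IsBraided r) (hsf : ∀ x : X, r (x, x) = (x, x)) (x y : X) :
    ∀ k : ℕ, ybι r y * ybι r x ^ k =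
      ybι r (sig r y x) ^ k * ybι r ((tau r x)^[k] y) := by
  intro k
  induction k with
  | zero => simp
  | succ n ih =>
    rw [pow_succ, ← mul_assoc, ih, mul_assoc, aux_rel r ((tau r x)^[n] y) x,
      aux_cyc_iter r hnd hinv hbr hsf x n y, ← mul_assoc, ← pow_succ,
      Function.iterate_succ_apply']

end Aux

/-- For a finite square-free solution `(X,r)` with cyclic
degree `p`, the subgroup `F_p` of `G = G(X,r)` generated by
`{ι(x)^p : x ∈ X}` is a normal subgroup of `G`. -/
theorem Fp_normal {X : Type*} [Fintype X] (r : X × X → X × X)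
    (hnd : Nondegenerate r) (hinv : Function.Involutive r) (hbr : IsBraided r)
    (hsf : ∀ x : X, r (x, x) = (x, x)) (p : ℕ) (hp : 0 < p)
    (hpord : ∀ x : X, (sig r x)^[p] = id)
    (hpmin : ∀ q : ℕ, 0 < q → (∀ x : X, (sig r x)^[q] = id) → p ≤ q) :
    (Subgroup.closure (Set.range fun x : X => ybι r x ^ p)).Normal := by
  set S : Set (YBGroup r) := Set.range fun x : X => ybι r x ^ p with hS
  set H : Subgroup (YBGroup r) := Subgroup.closure S with hH
  -- conjugation identity
  have hconj : ∀ x y : X, ybι r y * ybι r x ^ p * (ybι r y)⁻¹ =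
      ybι r (sig r y x) ^ p := by
    intro x y
    rw [aux_conj_pow r hnd hinv hbr hsf x y p,
      aux_tau_iter_id r hnd hinv hbr hsf p hpord x y, mul_inv_cancel_right]
  -- conjugation by a generator (and its inverse) preserves H
  have hgen : ∀ y : X, ∀ h ∈ H, ybι r y * h * (ybι r y)⁻¹ ∈ H ∧
      (ybι r y)⁻¹ * h * ybι r y ∈ H := by
    intro y h hh
    induction hh using Subgroup.closure_induction with
    | mem s hs =>
      obtain ⟨x, rfl⟩ := hs
      constructor
      · rw [hconj x y]
        exact Subgroup.subset_closure ⟨sig r y x, rfl⟩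
      · obtain ⟨z, hz⟩ := (hnd.1 y).2 x
        have : (ybι r y)⁻¹ * ybι r x ^ p * ybι r y = ybι r z ^ p := by
          rw [← hz, ← hconj z y]; group
        rw [this]
        exact Subgroup.subset_closure ⟨z, rfl⟩
    | one =>
      have h1 : ybι r y * 1 * (ybι r y)⁻¹ = 1 := by group
      have h2 : (ybι r y)⁻¹ * 1 * ybι r y = 1 := by group
      rw [h1, h2]; exact ⟨H.one_mem, H.one_mem⟩
    | mul a b _ _ iha ihb =>
      constructor
      · have : ybι r y * (a * b) * (ybι r y)⁻¹ =
            (ybι r y * a * (ybι r y)⁻¹) * (ybι r y * b * (ybι r y)⁻¹) := by group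
        rw [this]; exact Subgroup.mul_mem H iha.1 ihb.1
      · have : (ybι r y)⁻¹ * (a * b) * ybι r y =
            ((ybι r y)⁻¹ * a * ybι r y) * ((ybι r y)⁻¹ * b * ybι r y) := by group
        rw [this]; exact Subgroup.mul_mem H iha.2 ihb.2
    | inv a _ iha =>
      constructor
      · have : ybι r y * a⁻¹ * (ybι r y)⁻¹ = (ybι r y * a * (ybι r y)⁻¹)⁻¹ := by group
        rw [this]; exact Subgroup.inv_mem H iha.1
      · have : (ybι r y)⁻¹ * a⁻¹ * ybι r y = ((ybι r y)⁻¹ * a * ybι r y)⁻¹ := by group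
        rw [this]; exact Subgroup.inv_mem H iha.2
  -- every generator is in the normalizer
  have hnorm : ∀ y : X, ybι r y ∈ Subgroup.normalizer (H : Set (YBGroup r)) := by
    intro y
    rw [Subgroup.mem_normalizer_iff]
    intro h
    constructor
    · intro hh
      simpa [mul_assoc] using (hgen y h hh).1
    · intro hh
      have := (hgen y _ hh).2
      have h2 : (ybι r y)⁻¹ * (ybι r y * h * (ybι r y)⁻¹) * ybι r y = h := by group
      rwa [h2] at this
  -- hence the normalizer is everything
  have htop : Subgroup.normalizer (H : Set (YBGroup r)) = ⊤ := by
    rw [eq_top_iff, ← PresentedGroup.closure_range_of (ybRels r)]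
    rw [Subgroup.closure_le]
    rintro g ⟨y, rfl⟩
    exact hnorm y
  exact Subgroup.normalizer_eq_top_iff.mp htop
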